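/- Let p and q be probability distributions on ℤ supported on the nonnegative integers with p(0) > 0 and q(0) > 0. If (p*q̃)(n) ≥ 0 for all n ∈ ℤ and (q*p̃)(n) ≥ 0 for all n ∈ ℤ, then p = q. -/

import Mathlib

/-- Convolution of two sequences on `ℤ`: `(a*b)(n) = ∑_{k∈ℤ} a(k)·b(n−k)`.
For supported-below sequences this `tsum` has finitely many nonzero terms. -/
noncomputable def conv (a b : ℤ → ℝ) : ℤ → ℝ := fun n => ∑' k : ℤ, a k * b (n - k)

/-- A sequence is supported below if it vanishes for all sufficiently negative indices. -/
def SuppBelow (a : ℤ → ℝ) : Prop := ∃ N : ℤ, ∀ n : ℤ, n < N → a n = 0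

/-- A probability distribution on `ℤ`: nonnegative with total sum 1. -/
def IsProbDist (p : ℤ → ℝ) : Prop := (∀ n : ℤ, 0 ≤ p n) ∧ HasSum p 1

/-- `qt` is the reciprocal sequence `q̃` of `q`, relative to `nstar = n_*(q)`,
the least index where `q` is positive: `q̃` vanishes below `−n_*(q)` and
`(q̃*q)(n) = δ_{n,0}` for all `n`. -/
def IsRecip (q qt : ℤ → ℝ) (nstar : ℤ) : Prop :=
  IsLeast {n : ℤ | 0 < q n} nstar ∧ (∀ n : ℤ, n < -nstar → qt n = 0) ∧
  (∀ n : ℤ, conv qt q n = if n = 0 then (1 : ℝ) else 0)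

/-- The generalized Poisson sequence `P_λ : ℤ → ℝ`,
`P_λ(n) = e^{−λ}·λ^n/n!` for `n ≥ 0` and `P_λ(n) = 0` for `n < 0`. -/
noncomputable def poisson (lam : ℝ) : ℤ → ℝ :=
  fun n => if 0 ≤ n then Real.exp (-lam) * lam ^ n.toNat / (Nat.factorial n.toNat : ℝ) else 0

lemma conv_eq_sum {a b : ℤ → ℝ} (ha : ∀ n : ℤ, n < 0 → a n = 0)
    (hb : ∀ n : ℤ, n < 0 → b n = 0) (n : ℤ) :
    conv a b n = ∑ k ∈ Finset.Icc 0 n, a k * b (n - k) := by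
  refine tsum_eq_sum ?_
  intro k hk
  simp only [Finset.mem_Icc, not_and, not_le] at hk
  rcases lt_or_ge k 0 with h | h
  · rw [ha k h, zero_mul]
  · rw [hb (n - k) (by have := hk h; omega), mul_zero]

lemma conv_neg {a b : ℤ → ℝ} (ha : ∀ n : ℤ, n < 0 → a n = 0)
    (hb : ∀ n : ℤ, n < 0 → b n = 0) : ∀ n : ℤ, n < 0 → conv a b n = 0 := by
  intro n hn
  rw [conv_eq_sum ha hb, Finset.Icc_eq_empty (by omega), Finset.sum_empty]

lemma conv_comm' {a b : ℤ → ℝ} (ha : ∀ n : ℤ, n < 0 → a n = 0)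
    (hb : ∀ n : ℤ, n < 0 → b n = 0) : conv a b = conv b a := by
  funext n
  rw [conv_eq_sum ha hb, conv_eq_sum hb ha]
  refine Finset.sum_nbij' (fun k => n - k) (fun k => n - k) ?_ ?_ ?_ ?_ ?_ <;>
    simp only [Finset.mem_Icc] <;> intro k hk
  · omega
  · omega
  · omega
  · omega
  · rw [mul_comm]; ring_nf

lemma conv_assoc' {a b c : ℤ → ℝ} (ha : ∀ n : ℤ, n < 0 → a n = 0)
    (hb : ∀ n : ℤ, n < 0 → b n = 0) (hc : ∀ n : ℤ, n < 0 → c n = 0) :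
    conv (conv a b) c = conv a (conv b c) := by
  funext n
  rw [conv_eq_sum (conv_neg ha hb) hc, conv_eq_sum ha (conv_neg hb hc)]
  have L : ∀ k ∈ Finset.Icc (0:ℤ) n, conv a b k * c (n - k)
      = ∑ j ∈ Finset.Icc (0:ℤ) n, a j * b (k - j) * c (n - k) := by
    intro k hk
    simp only [Finset.mem_Icc] at hk
    rw [conv_eq_sum ha hb, Finset.sum_mul]
    refine Finset.sum_subset (Finset.Icc_subset_Icc le_rfl hk.2) ?_
    intro j hj hj'
    simp only [Finset.mem_Icc, not_and, not_le] at hj hj'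
    rw [hb (k - j) (by have := hj' hj.1; omega)]
    ring
  rw [Finset.sum_congr rfl L, Finset.sum_comm]
  refine Finset.sum_congr rfl ?_
  intro j hj
  simp only [Finset.mem_Icc] at hj
  rw [conv_eq_sum hb hc, Finset.mul_sum]
  have R : ∑ m ∈ Finset.Icc (0:ℤ) (n - j), a j * (b m * c (n - j - m))
      = ∑ k ∈ Finset.Icc j n, a j * b (k - j) * c (n - k) := by
    refine Finset.sum_nbij' (fun m => m + j) (fun k => k - j) ?_ ?_ ?_ ?_ ?_ <;>
      simp only [Finset.mem_Icc] <;> intro k hk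
    · omega
    · omega
    · omega
    · omega
    · ring_nf
  rw [R]
  refine (Finset.sum_subset (Finset.Icc_subset_Icc hj.1 le_rfl) ?_).symm
  intro k hk hk'
  simp only [Finset.mem_Icc, not_and, not_le] at hk hk'
  rw [hb (k - j) (by omega)]
  ring

/-- if `p, q` are probability distributions supported on the
nonnegative integers with `p(0) > 0` and `q(0) > 0`, and both `(p*q̃)(n) ≥ 0`
and `(q*p̃)(n) ≥ 0` hold for all `n ∈ ℤ`, then `p = q`. -/
theorem amaj_antisymm_zero (p q pt qt : ℤ → ℝ)
    (hp : IsProbDist p) (hq : IsProbDist q)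
    (hp0 : ∀ n : ℤ, n < 0 → p n = 0) (hq0 : ∀ n : ℤ, n < 0 → q n = 0)
    (hppos : 0 < p 0) (hqpos : 0 < q 0)
    (hpt : IsRecip p pt 0) (hqt : IsRecip q qt 0)
    (hpq : ∀ n : ℤ, 0 ≤ conv p qt n) (hqp : ∀ n : ℤ, 0 ≤ conv q pt n) :
    p = q := by
  obtain ⟨hpnn, hpsum⟩ := hp
  obtain ⟨hqnn, hqsum⟩ := hq
  have hqt0 : ∀ n : ℤ, n < 0 → qt n = 0 := fun n hn => hqt.2.1 n (by omega)
  have hpt0 : ∀ n : ℤ, n < 0 → pt n = 0 := fun n hn => hpt.2.1 n (by omega)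
  set δ : ℤ → ℝ := fun n => if n = 0 then (1:ℝ) else 0 with hδ
  have hδ0 : ∀ n : ℤ, n < 0 → δ n = 0 := by
    intro n hn; simp only [hδ, if_neg (by omega : n ≠ 0)]
  have hqtq : conv qt q = δ := funext hqt.2.2
  have hptp : conv pt p = δ := funext hpt.2.2
  have convδ : ∀ (x : ℤ → ℝ), conv x δ = x := by
    intro x; funext n
    have h1 : ∀ k : ℤ, k ≠ n → x k * δ (n - k) = 0 := by
      intro k hk
      have : n - k ≠ 0 := by omega
      simp [hδ, this]
    rw [show conv x δ n = ∑' k : ℤ, x k * δ (n - k) from rfl, tsum_eq_single n h1]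
    simp [hδ]
  set r := conv p qt with hr
  set s := conv q pt with hs
  have hr0 := conv_neg hp0 hqt0
  have hs0 := conv_neg hq0 hpt0
  have hrq : conv r q = p := by
    rw [hr, conv_assoc' hp0 hqt0 hq0, hqtq, convδ]
  have hppt : conv p pt = δ := by rw [conv_comm' hp0 hpt0, hptp]
  have hrs : conv r s = δ := by
    rw [hr, hs, conv_assoc' hp0 hqt0 (conv_neg hq0 hpt0)]
    have h2 : conv qt s = pt := by
      rw [hs, ← conv_assoc' hqt0 hq0 hpt0, hqtq, conv_comm' hδ0 hpt0, convδ]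
    rw [h2, hppt]
  have h00 : r 0 * s 0 = 1 := by
    have h := congrFun hrs 0
    rw [conv_eq_sum hr0 hs0] at h
    simpa [hδ] using h
  have hs0pos : 0 < s 0 := by
    rcases (hqp 0).lt_or_eq with h | h
    · exact h
    · rw [← h, mul_zero] at h00; exact absurd h00 zero_ne_one
  have hrpos : ∀ n : ℤ, 0 < n → r n = 0 := by
    intro n hn
    have h := congrFun hrs n
    rw [conv_eq_sum hr0 hs0] at h
    have hδn : δ n = 0 := by simp only [hδ]; exact if_neg (by omega)
    rw [hδn] at h
    have hterm : ∀ k ∈ Finset.Icc (0:ℤ) n, 0 ≤ r k * s (n - k) :=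
      fun k _ => mul_nonneg (hpq k) (hqp (n - k))
    have h2 := (Finset.sum_eq_zero_iff_of_nonneg hterm).mp h n
      (Finset.mem_Icc.mpr ⟨by omega, le_rfl⟩)
    simp only [sub_self] at h2
    exact (mul_eq_zero.mp h2).resolve_right (ne_of_gt hs0pos)
  have hpr : ∀ n : ℤ, p n = r 0 * q n := by
    intro n
    rcases lt_or_ge n 0 with h | h
    · rw [hp0 n h, hq0 n h, mul_zero]
    · have hcv := congrFun hrq n
      rw [conv_eq_sum hr0 hq0] at hcv
      rw [← hcv]
      rw [Finset.sum_eq_single_of_mem 0 (Finset.mem_Icc.mpr ⟨le_rfl, h⟩)]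
      · simp [hr]
      · intro k hk hk0
        simp only [Finset.mem_Icc] at hk
        exact mul_eq_zero_of_left (hrpos k (by omega)) _
  have hps : HasSum p (r 0) := by
    have h := hqsum.mul_left (r 0)
    rw [mul_one] at h
    exact (funext hpr : p = fun n => r 0 * q n) ▸ h
  have hr01 : r 0 = 1 := (hps.unique hpsum)
  funext n
  rw [hpr n, hr01, one_mul]
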